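/- arXiv:1709.01538 — 7 statements merged into one kernel-verified Lean document; each statement's English description precedes it below -/
import Mathlib

section
/- Let F be a path connected topological field and X a compact Hausdorff space. Then the image of the Gelfand map I_F : X → Max(C(X,F)) is a Hausdorff subspace of Max(C(X,F)) with the Zariski topology. -/
/-- The Zariski topology on the maximal spectrum, induced from the prime spectrum. -/
instance (R : Type*) [CommRing R] : TopologicalSpace (MaximalSpectrum R) :=
  TopologicalSpace.induced MaximalSpectrum.toPrimeSpectrum inferInstance

/-- Evaluation at a point as a ring homomorphism on the ring of continuous functions. -/
def evalHom (X F : Type*) [TopologicalSpace X] [TopologicalSpace F] [CommRing F]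
    [IsTopologicalRing F] (x : X) : C(X, F) →+* F where
  toFun f := f x
  map_one' := rfl
  map_mul' _ _ := rfl
  map_zero' := rfl
  map_add' _ _ := rfl

/-- The Gelfand map, sending a point to the maximal ideal of functions vanishing at it. -/
def gelfandMap (X F : Type*) [TopologicalSpace X] [Field F] [TopologicalSpace F]
    [IsTopologicalRing F] : X → MaximalSpectrum C(X, F) := fun x =>
  ⟨RingHom.ker (evalHom X F x),
    RingHom.ker_isMaximal_of_surjective _ fun a => ⟨ContinuousMap.const X a, rfl⟩⟩

/-- A bump function: 1 at `x`, 0 outside an open set `U` containing `x`. -/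
lemma exists_bump (F X : Type*) [Field F] [TopologicalSpace F] [IsTopologicalRing F]
    [PathConnectedSpace F] [TopologicalSpace X] [CompactSpace X] [T2Space X]
    {x : X} {U : Set X} (hU : IsOpen U) (hxU : x ∈ U) :
    ∃ h : C(X, F), h x = 1 ∧ ∀ z ∉ U, h z = 0 := by
  obtain ⟨f, hf0, hf1, hfI⟩ := exists_continuous_zero_one_of_isClosed
    (hU.isClosed_compl) (isClosed_singleton (x := x))
    (by rw [Set.disjoint_left]; intro a ha h; exact ha (h ▸ hxU))
  obtain γ : Path (0 : F) (1 : F) := PathConnectedSpace.somePath 0 1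
  refine ⟨⟨fun z => γ ⟨f z, hfI z⟩, γ.continuous.comp (f.continuous.subtype_mk _)⟩, ?_, ?_⟩
  · have : f x = 1 := hf1 rfl
    simp only [ContinuousMap.coe_mk]
    have : (⟨f x, hfI x⟩ : unitInterval) = 1 := Subtype.ext (by simpa using this)
    rw [this, γ.target]
  · intro z hz
    have : f z = 0 := hf0 hz
    simp only [ContinuousMap.coe_mk]
    have : (⟨f z, hfI z⟩ : unitInterval) = 0 := Subtype.ext (by simpa using this)
    rw [this, γ.source]

theorem stmt_8 (F X : Type*) [Field F] [TopologicalSpace F] [IsTopologicalDivisionRing F]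
    [T1Space F] [PathConnectedSpace F] [TopologicalSpace X] [CompactSpace X] [T2Space X] :
    T2Space (Set.range (gelfandMap X F)) := by
  constructor
  rintro ⟨a, x, rfl⟩ ⟨b, y, rfl⟩ hab
  have hxy : x ≠ y := fun h => hab (by rw [h])
  obtain ⟨U, V, hUo, hVo, hxU, hyV, hUV⟩ := t2_separation hxy
  obtain ⟨f, hfx, hf0⟩ := exists_bump F X hUo hxU
  obtain ⟨g, hgy, hg0⟩ := exists_bump F X hVo hyV
  have hfg : f * g = 0 := by
    ext z
    by_cases hz : z ∈ U
    · have : z ∉ V := fun h => Set.disjoint_left.mp hUV hz h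
      simp [hg0 z this]
    · simp [hf0 z hz]
  refine ⟨Subtype.val ⁻¹' (MaximalSpectrum.toPrimeSpectrum ⁻¹' (PrimeSpectrum.basicOpen f : Set (PrimeSpectrum C(X,F)))),
          Subtype.val ⁻¹' (MaximalSpectrum.toPrimeSpectrum ⁻¹' (PrimeSpectrum.basicOpen g : Set (PrimeSpectrum C(X,F)))),
          ?_, ?_, ?_, ?_, ?_⟩
  · exact (isOpen_induced (PrimeSpectrum.isOpen_basicOpen)).preimage continuous_subtype_val
  · exact (isOpen_induced (PrimeSpectrum.isOpen_basicOpen)).preimage continuous_subtype_val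
  · show f ∉ (gelfandMap X F x).asIdeal
    intro hmem
    have : f x = 0 := hmem
    rw [hfx] at this
    exact one_ne_zero this
  · show g ∉ (gelfandMap X F y).asIdeal
    intro hmem
    have : g y = 0 := hmem
    rw [hgy] at this
    exact one_ne_zero this
  · rw [Set.disjoint_left]
    rintro ⟨M, hM⟩ hMf hMg
    have hf : f ∉ M.asIdeal := hMf
    have hg : g ∉ M.asIdeal := hMg
    have hprime : M.asIdeal.IsPrime := M.isMaximal.isPrime
    have : f * g ∈ M.asIdeal := by rw [hfg]; exact M.asIdeal.zero_mem
    rcases hprime.mem_or_mem this with h | h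
    · exact hf h
    · exact hg h
end

section
/- Let F be a path connected topological field. Then for every compact Hausdorff space X, the Gelfand map I_F : X → Max(C(X,F)) is a homeomorphism onto its image (with the Zariski topology on Max(C(X,F))). -/
/-- Urysohn-type separation with values in a path connected topological field. -/
lemma gelfand_sep (F X : Type*) [Field F] [TopologicalSpace F] [IsTopologicalDivisionRing F]
    [T1Space F] [PathConnectedSpace F] [TopologicalSpace X] [CompactSpace X] [T2Space X]
    (C : Set X) (x : X) (hC : IsClosed C) (hx : x ∉ C) :
    ∃ f : C(X, F), f x = 1 ∧ ∀ y ∈ C, f y = 0 := by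
  obtain ⟨f, hf0, hf1, -⟩ := exists_continuous_zero_one_of_isClosed hC isClosed_singleton
    (by simpa [Set.disjoint_singleton_right] using hx)
  let γ : Path (0 : F) 1 := PathConnectedSpace.somePath 0 1
  refine ⟨⟨γ.extend ∘ f, γ.continuous_extend.comp f.continuous⟩, ?_, ?_⟩
  · have : f x = 1 := hf1 rfl
    simp [this, Path.extend_one]
  · intro y hy
    have : f y = 0 := hf0 hy
    simp [this, Path.extend_zero]

theorem stmt_9 (F X : Type*) [Field F] [TopologicalSpace F] [IsTopologicalDivisionRing F]
    [T1Space F] [PathConnectedSpace F] [TopologicalSpace X] [CompactSpace X] [T2Space X] :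
    Topology.IsEmbedding (gelfandMap X F) := by
  have hmem : ∀ (x : X) (f : C(X, F)), f ∈ (gelfandMap X F x).asIdeal ↔ f x = 0 :=
    fun _ _ => Iff.rfl
  -- injectivity
  have hinj : Function.Injective (gelfandMap X F) := by
    intro x y hxy
    by_contra hne
    obtain ⟨f, hfx, hfy⟩ := gelfand_sep F X {y} x isClosed_singleton (by simpa using hne)
    have h1 : f ∈ (gelfandMap X F y).asIdeal := (hmem y f).mpr (hfy y rfl)
    rw [← hxy] at h1
    exact one_ne_zero (hfx ▸ (hmem x f).mp h1)
  -- continuity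
  have hcont : Continuous (gelfandMap X F) := by
    rw [continuous_induced_rng]
    refine PrimeSpectrum.isTopologicalBasis_basic_opens.continuous_iff.mpr ?_
    rintro _ ⟨f, rfl⟩
    have : (MaximalSpectrum.toPrimeSpectrum ∘ gelfandMap X F) ⁻¹'
        (PrimeSpectrum.basicOpen f : Set (PrimeSpectrum C(X, F))) = {x | f x ≠ 0} := by
      ext x
      simp [PrimeSpectrum.basicOpen, MaximalSpectrum.toPrimeSpectrum, hmem x f]
      exact not_congr (hmem x f)
    rw [this]
    exact isOpen_compl_iff.mpr (isClosed_singleton.preimage f.continuous)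
  refine ⟨?_, hinj⟩
  rw [Topology.isInducing_iff_nhds]
  intro x
  refine le_antisymm (Filter.tendsto_iff_comap.mp (hcont.continuousAt (x := x))) ?_
  intro U hU
  obtain ⟨V, hVU, hVo, hxV⟩ := mem_nhds_iff.mp hU
  obtain ⟨g, hgx, hgV⟩ := gelfand_sep F X Vᶜ x hVo.isClosed_compl (by simpa using hxV)
  refine Filter.mem_comap.mpr ⟨MaximalSpectrum.toPrimeSpectrum ⁻¹'
    (PrimeSpectrum.basicOpen g : Set (PrimeSpectrum C(X, F))), ?_, ?_⟩
  · refine IsOpen.mem_nhds (isOpen_induced (PrimeSpectrum.basicOpen g).isOpen) ?_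
    show g ∉ (gelfandMap X F x).asIdeal
    rw [hmem, hgx]
    exact one_ne_zero
  · intro y hy
    by_contra hyV
    exact hy (by exact (hmem y g).mpr (hgV y (fun h => hyV (hVU h))))
end

section
/- Let F be a topological field that is not locally compact, and let Y be a compact space with continuous functions ψ₁, ψ₂ : Y → F that have no common zero. Then there exists a ∈ F such that ψ₁(x) − a·ψ₂(x) ≠ 0 for all x ∈ Y. -/
open Filter Set Topology

theorem stmt_13 (F Y : Type*) [Field F] [TopologicalSpace F] [IsTopologicalDivisionRing F]
    [T1Space F] (hF : ¬LocallyCompactSpace F) [TopologicalSpace Y] [CompactSpace Y]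
    (ψ₁ ψ₂ : C(Y, F)) (h : ∀ x : Y, ψ₁ x ≠ 0 ∨ ψ₂ x ≠ 0) :
    ∃ a : F, ∀ x : Y, ψ₁ x - a * ψ₂ x ≠ 0 := by
  by_contra hcon
  push_neg at hcon
  -- every a ∈ F is a "ratio" ψ₁ x / ψ₂ x
  have hrat : ∀ a : F, ∃ x : Y, ψ₁ x = a * ψ₂ x := by
    intro a
    obtain ⟨x, hx⟩ := hcon a
    exact ⟨x, by linear_combination hx⟩
  -- choose disjoint open neighborhoods B of 0 and V of 1
  obtain ⟨B, V, hBo, hVo, hB0, hV1, hBV⟩ := t2_separation (zero_ne_one (α := F))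
  -- choose a neighborhood W of 0 with W * W ⊆ B
  have hmul : Tendsto (fun p : F × F => p.1 * p.2) (𝓝 ((0 : F), (0 : F))) (𝓝 0) := by
    simpa using (continuous_mul (M := F)).tendsto ((0 : F), 0)
  rw [nhds_prod_eq] at hmul
  have hBnhds : B ∈ 𝓝 (0 : F) := hBo.mem_nhds hB0
  obtain ⟨U₀, hU₀, W₀, hW₀, hUW₀⟩ := Filter.mem_prod_iff.1 (hmul hBnhds)
  obtain ⟨U, hUsub, hUo, hU0⟩ := mem_nhds_iff.1 hU₀
  obtain ⟨W, hWsub, hWo, hW0⟩ := mem_nhds_iff.1 hW₀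
  have hUW : ∀ a ∈ U, ∀ w ∈ W, a * w ∈ B := fun a ha w hw =>
    hUW₀ (Set.mk_mem_prod (hUsub ha) (hWsub hw))
  have hU : U ∈ 𝓝 (0 : F) := hUo.mem_nhds hU0
  -- the open set O covering the zero set of ψ₂
  set O : Set Y := ⋃ c ∈ {c : F | c ≠ 0},
      ((fun y => c⁻¹ * ψ₂ y) ⁻¹' W) ∩ ((fun y => c⁻¹ * ψ₁ y) ⁻¹' V) with hO
  have hOopen : IsOpen O := by
    refine isOpen_biUnion fun c _ => IsOpen.inter ?_ ?_
    · exact (hWo.preimage (by fun_prop))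
    · exact (hVo.preimage (by fun_prop))
  have hZO : ∀ y : Y, ψ₂ y = 0 → y ∈ O := by
    intro y hy
    have h1 : ψ₁ y ≠ 0 := (h y).resolve_right (by simp [hy])
    refine mem_biUnion h1 ⟨?_, ?_⟩
    · simp [hy, hW0]
    · simp [inv_mul_cancel₀ h1, hV1]
  set L : Set Y := Oᶜ with hL
  have hLcomp : IsCompact L := hOopen.isClosed_compl.isCompact
  have hLne : ∀ y ∈ L, ψ₂ y ≠ 0 := fun y hy hz => hy (hZO y hz)
  -- the continuous "ratio" map on L
  have hcont : ContinuousOn (fun y => ψ₁ y * (ψ₂ y)⁻¹) L := by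
    apply ContinuousOn.mul (ψ₁.continuous.continuousOn)
    exact ContinuousOn.inv₀ ψ₂.continuous.continuousOn hLne
  have hKcomp : IsCompact ((fun y => ψ₁ y * (ψ₂ y)⁻¹) '' L) :=
    hLcomp.image_of_continuousOn hcont
  -- U ⊆ K
  have hUK : U ⊆ (fun y => ψ₁ y * (ψ₂ y)⁻¹) '' L := by
    intro a ha
    obtain ⟨x, hx⟩ := hrat a
    have hxL : x ∈ L := by
      intro hxO
      simp only [hO, mem_iUnion, mem_inter_iff, mem_preimage, mem_setOf_eq,
        exists_prop] at hxO
      obtain ⟨c, hc, hw, hv⟩ := hxO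
      have hb : c⁻¹ * ψ₁ x ∈ B := by
        have := hUW a ha _ hw
        simpa [hx, mul_comm, mul_assoc, mul_left_comm] using this
      exact Set.disjoint_left.1 hBV hb hv
    have hψ₂ : ψ₂ x ≠ 0 := hLne x hxL
    exact ⟨x, hxL, by field_simp [hx]; rw [hx, mul_comm]⟩
  -- hence 0 has a compact neighborhood, so F is locally compact
  exact hF (hKcomp.locallyCompactSpace_of_mem_nhds_of_addGroup (mem_of_superset hU hUK))
end

section
/- Let X be a compact Hausdorff space, F a non-algebraically-closed field carrying any field topology, and M a maximal ideal of C(X,F) containing functions ψ₁,...,ψₙ with no common zero on X. Then M = C(X,F) (i.e., no proper ideal of C(X,F) can contain functions without a common zero, given a polynomial over F vanishing only at the origin). -/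
theorem stmt_16 (F X : Type*) [Field F] [TopologicalSpace F] [IsTopologicalDivisionRing F]
    [T1Space F] (hF : ¬IsAlgClosed F) [TopologicalSpace X] [CompactSpace X] [T2Space X]
    (M : Ideal C(X, F)) (hM : M.IsMaximal) (n : ℕ) (ψ : Fin n → C(X, F))
    (hmem : ∀ i, ψ i ∈ M) (h : ∀ x : X, ∃ i, ψ i x ≠ 0) :
    M = ⊤ := by
  classical
  -- obtain a monic irreducible polynomial with no root
  obtain ⟨p, hpm, hpi, hpr⟩ : ∃ p : Polynomial F, p.Monic ∧ Irreducible p ∧ ∀ x, p.eval x ≠ 0 := by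
    by_contra hc
    push_neg at hc
    exact hF (IsAlgClosed.of_exists_root F fun p hm hi => hc p hm hi)
  set d := p.natDegree with hd
  have hd1 : 1 ≤ d := hpi.natDegree_pos
  -- the two-variable homogenization, as a function
  set q : F → F → F := fun a b => ∑ i ∈ Finset.range (d + 1), p.coeff i * a ^ i * b ^ (d - i)
    with hq
  have hq0 : ∀ a b, q a b = 0 → a = 0 ∧ b = 0 := by
    intro a b hab
    by_cases hb : b = 0
    · subst hb
      have : q a 0 = a ^ d := by
        show (∑ i ∈ Finset.range (d + 1), p.coeff i * a ^ i * (0:F) ^ (d - i)) = a ^ d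
        rw [Finset.sum_eq_single d]
        · simp [hd, hpm.coeff_natDegree]
        · intro i hi hne
          have hi' : i < d + 1 := Finset.mem_range.mp hi
          simp [zero_pow (by omega : d - i ≠ 0)]
        · intro hd'; exact absurd (Finset.self_mem_range_succ d) hd'
      rw [this] at hab
      exact ⟨pow_eq_zero_iff (by omega) |>.mp hab, rfl⟩
    · exfalso
      have key : q a b = b ^ d * p.eval (a / b) := by
        rw [hq, Polynomial.eval_eq_sum_range, Finset.mul_sum]
        refine Finset.sum_congr rfl fun i hi => ?_
        have hi' : i ≤ d := by
          simpa using Nat.lt_succ_iff.mp (Finset.mem_range.mp hi)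
        field_simp
        rw [show b ^ d = b ^ (d - i) * b ^ i by rw [← pow_add, Nat.sub_add_cancel hi'], div_pow]
        field_simp
      rw [key] at hab
      rcases mul_eq_zero.mp hab with h1 | h1
      · exact hb (pow_eq_zero_iff (by omega) |>.mp h1)
      · exact hpr _ h1
  -- key inductive construction
  have main : ∀ m (φ : Fin m → C(X, F)), (∀ i, φ i ∈ M) →
      ∃ u ∈ M, ∀ x : X, u x = 0 → ∀ i, φ i x = 0 := by
    intro m
    induction m with
    | zero => exact fun φ _ => ⟨0, M.zero_mem, fun x _ i => i.elim0⟩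
    | succ k ih =>
      intro φ hφ
      obtain ⟨u, huM, hu⟩ := ih (fun i => φ i.castSucc) (fun i => hφ _)
      set B := φ (Fin.last k) with hB
      set w : C(X, F) := ∑ i ∈ Finset.range (d + 1),
        (algebraMap F C(X, F)) (p.coeff i) * u ^ i * B ^ (d - i) with hw
      have hwM : w ∈ M := by
        refine Ideal.sum_mem M fun i hi => ?_
        rcases Nat.eq_zero_or_pos i with h0 | h0
        · subst h0
          have : B ^ (d - 0) = B ^ (d - 1) * B := by
            rw [← pow_succ]
            congr 1
            omega
          rw [this]
          exact M.mul_mem_left _ (M.mul_mem_left _ (hφ (Fin.last k)))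
        · have hpow : u ^ i = u ^ (i - 1) * u := by
            rw [← pow_succ]; congr 1; omega
          have : (algebraMap F C(X, F)) (p.coeff i) * u ^ i * B ^ (d - i) =
              ((algebraMap F C(X, F)) (p.coeff i) * u ^ (i - 1) * B ^ (d - i)) * u := by
            rw [hpow]; ring
          rw [this]
          exact M.mul_mem_left _ huM
      refine ⟨w, hwM, fun x hx i => ?_⟩
      have hwx : w x = q (u x) (B x) := by
        rw [hw, hq]
        simp
      rw [hwx] at hx
      obtain ⟨h1, h2⟩ := hq0 _ _ hx
      induction i using Fin.lastCases with
      | last => exact h2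
      | cast j => exact hu x h1 j
  obtain ⟨u, huM, hu⟩ := main n ψ hmem
  have hune : ∀ x, u x ≠ 0 := by
    intro x hx
    obtain ⟨i, hi⟩ := h x
    exact hi (hu x hx i)
  have hunit : IsUnit u := by
    refine isUnit_iff_exists.mpr ⟨⟨fun x => (u x)⁻¹, u.continuous.inv₀ hune⟩, ?_, ?_⟩ <;>
      · ext x
        simp [mul_inv_cancel₀ (hune x), inv_mul_cancel₀ (hune x)]
  exact M.eq_top_of_isUnit_mem huM hunit
end

section
/- Let F be a path connected metrizable topological field. Then for every positive integer n there is a continuous function f_n : Fⁿ → F whose zero set is exactly the origin: f_n(v) = 0 if and only if v = (0,...,0). -/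
theorem stmt_17 (F : Type*) [Field F] [TopologicalSpace F] [IsTopologicalDivisionRing F]
    [T1Space F] [PathConnectedSpace F] [TopologicalSpace.MetrizableSpace F]
    (n : ℕ) (hn : 0 < n) :
    ∃ f : (Fin n → F) → F, Continuous f ∧ ∀ v : Fin n → F, f v = 0 ↔ v = 0 := by
  letI : MetricSpace (Fin n → F) := TopologicalSpace.metrizableSpaceMetric _
  obtain ⟨a, ha⟩ := exists_ne (0 : F)
  obtain ⟨γ⟩ : Nonempty (Path (0 : F) a) := PathConnectedSpace.joined (0 : F) a
  set S : Set ℝ := {t | t ∈ Set.Icc (0:ℝ) 1 ∧ γ.extend t = 0} with hS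
  have hSne : (0:ℝ) ∈ S := ⟨⟨le_refl 0, zero_le_one⟩, by simp⟩
  have hSbdd : BddAbove S := ⟨1, fun t ht => ht.1.2⟩
  have hSclosed : IsClosed S := by
    have : S = Set.Icc (0:ℝ) 1 ∩ (γ.extend ⁻¹' {0}) := by ext t; simp [hS, Set.mem_Icc]
    rw [this]
    exact isClosed_Icc.inter (isClosed_singleton.preimage γ.continuous_extend)
  set t₀ : ℝ := sSup S with ht₀
  have ht₀S : t₀ ∈ S := hSclosed.csSup_mem ⟨0, hSne⟩ hSbdd
  have ht₀0 : 0 ≤ t₀ := ht₀S.1.1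
  have ht₀1 : t₀ < 1 := by
    rcases lt_or_eq_of_le ht₀S.1.2 with h | h
    · exact h
    · exfalso; apply ha; rw [← γ.extend_one, ← h]; exact ht₀S.2.symm ▸ ht₀S.2.symm
  have key : ∀ t : ℝ, t₀ < t → t ≤ 1 → γ.extend t ≠ 0 := by
    intro t h1 h2 h0
    exact absurd (le_csSup hSbdd ⟨⟨ht₀0.trans h1.le, h2⟩, h0⟩) (not_le.mpr h1)
  refine ⟨fun v => γ.extend (t₀ + (1 - t₀) * min 1 (dist v 0)), ?_, ?_⟩
  · exact γ.continuous_extend.comp (by fun_prop)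
  · intro v
    constructor
    · intro hv
      by_contra hv0
      have hd : 0 < dist v 0 := dist_pos.mpr hv0
      have hmin : 0 < min 1 (dist v 0) := lt_min one_pos hd
      have harg1 : t₀ < t₀ + (1 - t₀) * min 1 (dist v 0) := by
        nlinarith
      have harg2 : t₀ + (1 - t₀) * min 1 (dist v 0) ≤ 1 := by
        have : min 1 (dist v 0) ≤ 1 := min_le_left _ _
        nlinarith
      exact key _ harg1 harg2 hv
    · intro hv
      subst hv
      simp only [dist_self, min_eq_right zero_le_one, mul_zero, add_zero]
      simpa using ht₀S.2
end

section
/- A topological field F is path connected if and only if for every nonempty compact Hausdorff topological space X, the Gelfand map I_F : X → Max(C(X,F)), x ↦ {f ∈ C(X,F) : f(x) = 0}, is a homeomorphism, where Max carries the Zariski topology. -/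
open Set

section aux
variable {F : Type} [Field F] [TopologicalSpace F] [IsTopologicalDivisionRing F] [T1Space F]
variable {X : Type} [TopologicalSpace X]

lemma urysohnF [NormalSpace X] (hF : Joined (0:F) (1:F)) {A B : Set X}
    (hA : IsClosed A) (hB : IsClosed B) (hAB : Disjoint A B) :
    ∃ (e : C(X,F)) (VA VB : Set X), IsOpen VA ∧ IsOpen VB ∧ A ⊆ VA ∧ B ⊆ VB ∧
      (∀ x ∈ VA, e x = 0) ∧ (∀ x ∈ VB, e x = 1) := by
  obtain ⟨u, hu0, hu1, _⟩ := exists_continuous_zero_one_of_isClosed hA hB hAB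
  set γ : Path (0:F) 1 := hF.somePath with hγ
  have hclamp : Continuous fun t : ℝ => Set.projIcc (0:ℝ) 1 zero_le_one (3*t-1) :=
    continuous_projIcc.comp (by continuity)
  refine ⟨⟨fun x => γ (Set.projIcc 0 1 zero_le_one (3 * u x - 1)),
    γ.continuous.comp (hclamp.comp u.continuous)⟩,
    {x | u x < 1/3}, {x | 2/3 < u x}, isOpen_lt u.continuous continuous_const,
    isOpen_lt continuous_const u.continuous, ?_, ?_, ?_, ?_⟩
  · intro x hx; simp only [mem_setOf_eq, hu0 hx]; norm_num
  · intro x hx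
    have := hu1 hx
    simp only [mem_setOf_eq, this]; norm_num
  · intro x hx
    simp only [ContinuousMap.coe_mk]
    have h1 : 3 * u x - 1 ≤ 0 := by
      have : u x < 1/3 := hx
      linarith
    rw [Set.projIcc_of_le_left _ h1]
    exact γ.source
  · intro x hx
    simp only [ContinuousMap.coe_mk]
    have h1 : (1:ℝ) ≤ 3 * u x - 1 := by
      have : (2:ℝ)/3 < u x := hx
      linarith
    rw [Set.projIcc_of_right_le _ h1]
    exact γ.target

end aux

section aux2
variable {F : Type} [Field F] [TopologicalSpace F] [IsTopologicalDivisionRing F] [T1Space F]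
variable {X : Type} [TopologicalSpace X]

lemma span_lemma [CompactSpace X] [T2Space X] (hF : Joined (0:F) (1:F)) :
    ∀ (L : List C(X,F)) (g : C(X,F)) (V : Set X), IsOpen V → (∀ x ∈ V, g x = 0) →
      (∀ x, (∀ f ∈ L, f x = 0) → x ∈ V) → g ∈ Ideal.span {f : C(X,F) | f ∈ L} := by
  intro L
  induction L with
  | nil =>
    intro g V _ hgV hcov
    have : g = 0 := by
      ext x
      exact hgV x (hcov x (by simp))
    rw [this]
    exact Submodule.zero_mem _
  | cons f L ih =>
    intro g V hV hgV hcov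
    have hZf : IsClosed {x | f x = 0} := isClosed_eq f.continuous continuous_const
    have hZL : IsClosed {x | ∀ h ∈ L, h x = 0} := by
      have : {x | ∀ h ∈ L, h x = 0} = ⋂ (h : C(X,F)) (_ : h ∈ L), {x | h x = 0} := by
        ext x; simp
      rw [this]
      exact isClosed_iInter fun h => isClosed_iInter fun _ =>
        isClosed_eq h.continuous continuous_const
    have hdisj : Disjoint ({x | f x = 0} ∩ Vᶜ) ({x | ∀ h ∈ L, h x = 0} ∩ Vᶜ) := by
      rw [Set.disjoint_left]
      rintro x ⟨hxf, hxV⟩ ⟨hxL, -⟩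
      exact hxV (hcov x (by
        intro h hh
        rcases List.mem_cons.mp hh with rfl | hh
        · exact hxf
        · exact hxL h hh))
    obtain ⟨e, VA, VB, hVA, hVB, hAVA, hBVB, he0, he1⟩ :=
      urysohnF (F := F) hF (hZf.inter hV.isClosed_compl) (hZL.inter hV.isClosed_compl) hdisj
    -- Z(f) ⊆ V ∪ VA
    have hZfsub : {x | f x = 0} ⊆ V ∪ VA := by
      intro x hx
      by_cases hxV : x ∈ V
      · exact Or.inl hxV
      · exact Or.inr (hAVA ⟨hx, hxV⟩)
    -- the quotient function
    have heg0 : ∀ x ∈ V ∪ VA, e x * g x = 0 := by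
      rintro x (hx | hx)
      · rw [hgV x hx, mul_zero]
      · rw [he0 x hx, zero_mul]
    have hqcont : Continuous fun x => e x * g x * (f x)⁻¹ := by
      rw [continuous_iff_continuousAt]
      intro x
      by_cases hfx : f x = 0
      · have hmem : V ∪ VA ∈ nhds x := (hV.union hVA).mem_nhds (hZfsub hfx)
        have : (fun x => e x * g x * (f x)⁻¹) =ᶠ[nhds x] fun _ => 0 := by
          filter_upwards [hmem] with y hy
          rw [heg0 y hy, zero_mul]
        exact ContinuousAt.congr continuousAt_const this.symm
      · exact ((e.continuous.mul g.continuous).continuousAt).mul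
          (f.continuous.continuousAt.inv₀ hfx)
    have hfactor : e * g = (⟨_, hqcont⟩ : C(X,F)) * f := by
      ext x
      simp only [ContinuousMap.mul_apply, ContinuousMap.coe_mk]
      by_cases hfx : f x = 0
      · rw [hfx, mul_zero, heg0 x (hZfsub hfx)]
      · rw [inv_mul_cancel_right₀ hfx]
    have hmem1 : e * g ∈ Ideal.span {h : C(X,F) | h ∈ f :: L} := by
      rw [hfactor]
      exact Ideal.mul_mem_left _ _ (Ideal.subset_span (by simp))
    have hmem2 : (1 - e) * g ∈ Ideal.span {h : C(X,F) | h ∈ L} := by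
      refine ih ((1-e)*g) (V ∪ VB) (hV.union hVB) ?_ ?_
      · rintro x (hx | hx)
        · simp [hgV x hx]
        · simp [he1 x hx]
      · intro x hx
        by_cases hxV : x ∈ V
        · exact Or.inl hxV
        · exact Or.inr (hBVB ⟨hx, hxV⟩)
    have hspanmono : Ideal.span {h : C(X,F) | h ∈ L} ≤ Ideal.span {h : C(X,F) | h ∈ f :: L} :=
      Ideal.span_mono (by intro h hh; simp [List.mem_cons]; right; exact hh)
    have : g = e * g + (1 - e) * g := by ring
    rw [this]
    exact Ideal.add_mem _ hmem1 (hspanmono hmem2)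

end aux2

section main
variable {F : Type} [Field F] [TopologicalSpace F] [IsTopologicalDivisionRing F] [T1Space F]
variable {X : Type} [TopologicalSpace X]

lemma gelfand_surjective [CompactSpace X] [T2Space X] [Nonempty X]
    (hF : Joined (0:F) (1:F)) (m : MaximalSpectrum C(X,F)) :
    ∃ x, gelfandMap X F x = m := by
  set M := m.asIdeal with hM
  have hexists : ∃ x : X, ∀ f ∈ M, f x = 0 := by
    by_contra hcon
    push_neg at hcon
    choose φ hφM hφne using hcon
    have hcover : (Set.univ : Set X) ⊆ ⋃ (f : ↥M), {x | (f : C(X,F)) x ≠ 0} := by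
      intro x _
      exact Set.mem_iUnion.mpr ⟨⟨φ x, hφM x⟩, hφne x⟩
    obtain ⟨t, ht⟩ := isCompact_univ.elim_finite_subcover
      (fun f : ↥M => {x | (f : C(X,F)) x ≠ 0})
      (fun f => (isOpen_ne_fun (f : C(X,F)).continuous continuous_const)) hcover
    set L : List C(X,F) := t.toList.map Subtype.val with hL
    have hone : (1 : C(X,F)) ∈ Ideal.span {h : C(X,F) | h ∈ L} := by
      refine span_lemma hF L 1 ∅ isOpen_empty (by simp) ?_
      intro x hx
      exfalso
      obtain ⟨s, hs⟩ := Set.mem_iUnion.mp (ht (Set.mem_univ x))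
      obtain ⟨hst, hsx⟩ := Set.mem_iUnion.mp hs
      refine hsx (hx _ ?_)
      rw [hL]
      exact List.mem_map.mpr ⟨s, Finset.mem_toList.mpr hst, rfl⟩
    have hsub : Ideal.span {h : C(X,F) | h ∈ L} ≤ M := by
      rw [Ideal.span_le]
      rintro h hh
      have hh' : h ∈ t.toList.map Subtype.val := by rw [← hL]; exact hh
      obtain ⟨s, -, rfl⟩ := List.mem_map.mp hh'
      exact s.2
    exact m.isMaximal.ne_top (Ideal.eq_top_iff_one M |>.mpr (hsub hone))
  obtain ⟨x, hx⟩ := hexists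
  refine ⟨x, ?_⟩
  have hle : M ≤ RingHom.ker (evalHom X F x) := by
    intro f hf
    exact RingHom.mem_ker.mpr (hx f hf)
  have hne : RingHom.ker (evalHom X F x) ≠ ⊤ := by
    intro h
    have : (1 : C(X,F)) ∈ RingHom.ker (evalHom X F x) := h ▸ Submodule.mem_top
    simp only [RingHom.mem_ker] at this
    exact one_ne_zero ((by exact this : (1:F) = 0))
  have := m.isMaximal.eq_of_le hne hle
  exact (MaximalSpectrum.ext this.symm)

lemma gelfand_continuous : Continuous (gelfandMap X F) := by
  rw [continuous_induced_rng]
  rw [continuous_iff_isClosed]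
  intro C hC
  obtain ⟨s, rfl⟩ := (PrimeSpectrum.isClosed_iff_zeroLocus _).mp hC
  have : (MaximalSpectrum.toPrimeSpectrum ∘ gelfandMap X F) ⁻¹' PrimeSpectrum.zeroLocus s
      = ⋂ f ∈ s, {x | f x = 0} := by
    ext x
    simp only [Set.mem_preimage, Function.comp_apply, PrimeSpectrum.mem_zeroLocus,
      Set.mem_iInter, Set.mem_setOf_eq]
    constructor
    · intro h f hf
      exact h hf
    · intro h f hf
      exact RingHom.mem_ker.mpr (h f hf)
  rw [this]
  exact isClosed_biInter fun f _ => isClosed_eq f.continuous continuous_const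

end main

section main2
variable {F : Type} [Field F] [TopologicalSpace F] [IsTopologicalDivisionRing F] [T1Space F]
variable {X : Type} [TopologicalSpace X]

lemma gelfand_injective [CompactSpace X] [T2Space X] (hF : Joined (0:F) (1:F)) :
    Function.Injective (gelfandMap X F) := by
  intro x y hxy
  by_contra hne
  obtain ⟨e, VA, VB, _, _, hA, hB, he0, he1⟩ := urysohnF (F := F) hF
    (isClosed_singleton (x := x)) (isClosed_singleton (x := y))
    (Set.disjoint_singleton.mpr hne)
  have h1 : e ∈ RingHom.ker (evalHom X F x) := by
    have : e x = 0 := he0 x (hA rfl)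
    exact this
  have h2 : e ∈ RingHom.ker (evalHom X F y) := by
    have := congrArg MaximalSpectrum.asIdeal hxy
    simp only [gelfandMap] at this
    rw [← this]
    exact h1
  have : e y = 0 := h2
  rw [he1 y (hB rfl)] at this
  exact one_ne_zero this

lemma gelfand_isClosedMap [CompactSpace X] [T2Space X] [Nonempty X]
    (hF : Joined (0:F) (1:F)) : IsClosedMap (gelfandMap X F) := by
  intro C hC
  have key : gelfandMap X F '' C = MaximalSpectrum.toPrimeSpectrum ⁻¹'
      (PrimeSpectrum.zeroLocus {f : C(X,F) | ∀ x ∈ C, f x = 0}) := by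
    ext m
    simp only [Set.mem_image, Set.mem_preimage, PrimeSpectrum.mem_zeroLocus]
    constructor
    · rintro ⟨x, hxC, rfl⟩ f hf
      exact RingHom.mem_ker.mpr (hf x hxC)
    · intro hm
      obtain ⟨x, rfl⟩ := gelfand_surjective hF m
      refine ⟨x, ?_, rfl⟩
      by_contra hxC
      obtain ⟨e, VA, VB, _, _, hA, hB, he0, he1⟩ := urysohnF (F := F) hF hC
        (isClosed_singleton (x := x)) (Set.disjoint_singleton_right.mpr hxC)
      have he : e ∈ {f : C(X,F) | ∀ x ∈ C, f x = 0} := fun y hy => he0 y (hA hy)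
      have h0 : e x = 0 := hm he
      rw [he1 x (hB rfl)] at h0
      exact one_ne_zero h0
  rw [key]
  exact (PrimeSpectrum.isClosed_zeroLocus _).preimage continuous_induced_dom

end main2

theorem stmt_18 (F : Type) [Field F] [TopologicalSpace F] [IsTopologicalDivisionRing F]
    [T1Space F] :
    PathConnectedSpace F ↔
      ∀ (X : Type) [TopologicalSpace X] [CompactSpace X] [T2Space X] [Nonempty X],
        IsHomeomorph (gelfandMap X F) := by
  constructor
  · intro hpc X _ _ _ _
    have hF : Joined (0:F) (1:F) := hpc.joined 0 1
    have hbij : Function.Bijective (gelfandMap X F) :=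
      ⟨gelfand_injective hF, fun m => gelfand_surjective hF m⟩
    refine ⟨gelfand_continuous, ?_, hbij⟩
    intro U hU
    rw [← compl_compl (gelfandMap X F '' U), ← Set.image_compl_eq hbij]
    exact ((gelfand_isClosedMap hF) _ hU.isClosed_compl).isOpen_compl
  · intro h
    have hinj := (h ↥unitInterval).injective
    have h01 : (0 : ↥unitInterval) ≠ 1 := by
      intro hh
      have := congrArg Subtype.val hh
      norm_num at this
    have hne : gelfandMap ↥unitInterval F 0 ≠ gelfandMap ↥unitInterval F 1 :=
      fun hh => h01 (hinj hh)
    have hex : ∃ f : C(↥unitInterval, F), ¬(f 0 = 0 ↔ f 1 = 0) := by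
      by_contra hcon
      push_neg at hcon
      apply hne
      apply MaximalSpectrum.ext
      ext f
      simp only [gelfandMap, RingHom.mem_ker]
      exact hcon f
    obtain ⟨f, hf⟩ := hex
    have hkey : ∃ c : F, c ≠ 0 ∧ Joined (0:F) c := by
      rcases Classical.em (f 0 = 0) with h0 | h0
      · have h1 : f 1 ≠ 0 := fun h1 => hf (by rw [h0, h1])
        refine ⟨f 1, h1, ?_⟩
        have : Joined (f 0) (f 1) := ⟨⟨f, rfl, rfl⟩⟩
        rwa [h0] at this
      · have h1 : f 1 = 0 := by
          by_contra h1
          exact hf ⟨fun hh => absurd hh h0, fun hh => absurd hh h1⟩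
        refine ⟨f 0, h0, ?_⟩
        have : Joined (f 0) (f 1) := ⟨⟨f, rfl, rfl⟩⟩
        have := this.symm
        rwa [h1] at this
    obtain ⟨c, hc, hjc⟩ := hkey
    have hj : ∀ a : F, Joined (0:F) a := by
      intro a
      have hcont : Continuous fun z : F => a * c⁻¹ * z := continuous_const.mul continuous_id
      have : Joined (a * c⁻¹ * 0) (a * c⁻¹ * c) := ⟨(hjc.somePath).map hcont⟩
      simpa [inv_mul_cancel_right₀ hc] using this
    exact ⟨⟨0⟩, fun x y => (hj x).symm.trans (hj y)⟩
end

section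
/- Let X be a nonempty compact Hausdorff topological space. Then the map I : X → Max(C(X,ℝ)) sending x₀ to the maximal ideal {f ∈ C(X,ℝ) : f(x₀) = 0} is a homeomorphism, where Max(C(X,ℝ)) carries the Zariski topology. -/
lemma mem_gelfandMap {X : Type*} [TopologicalSpace X] {x : X} {f : C(X, ℝ)} :
    f ∈ (gelfandMap X ℝ x).asIdeal ↔ f x = 0 := by
  simp [gelfandMap, RingHom.mem_ker, evalHom]
  exact Iff.rfl

/-- Every maximal ideal of C(X,ℝ) has a common zero, for X compact. -/
lemma exists_common_zero {X : Type*} [TopologicalSpace X] [CompactSpace X]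
    (M : MaximalSpectrum C(X, ℝ)) : ∃ x : X, ∀ f ∈ M.asIdeal, f x = 0 := by
  by_contra h
  push_neg at h
  have hempty : (Set.univ : Set X) ∩ ⋂ f : M.asIdeal, (f : C(X, ℝ)) ⁻¹' {0} = ∅ := by
    ext x
    simp only [Set.mem_inter_iff, Set.mem_univ, true_and, Set.mem_iInter, Set.mem_preimage,
      Set.mem_singleton_iff, Set.mem_empty_iff_false, iff_false, not_forall]
    obtain ⟨f, hfM, hfx⟩ := h x
    exact ⟨⟨f, hfM⟩, hfx⟩
  obtain ⟨t, ht⟩ := IsCompact.elim_finite_subfamily_closed isCompact_univ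
    (fun f : M.asIdeal => (f : C(X, ℝ)) ⁻¹' {0})
    (fun f => isClosed_singleton.preimage (f : C(X, ℝ)).continuous) hempty
  set g : C(X, ℝ) := ∑ f ∈ t, (f : C(X, ℝ)) ^ 2 with hg
  have hgM : g ∈ M.asIdeal :=
    Ideal.sum_mem _ fun f _ => Ideal.pow_mem_of_mem _ f.2 2 (by norm_num)
  have hgne : ∀ x, g x ≠ 0 := by
    intro x
    have hx' : x ∉ ⋂ i ∈ t, ((i : C(X, ℝ)) ⁻¹' {0}) := by
      intro hmem
      have : x ∈ (∅ : Set X) := ht ▸ ⟨trivial, hmem⟩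
      exact this
    obtain ⟨f0, hf0t, hf0x⟩ : ∃ f0 ∈ t, ((f0 : C(X, ℝ)) x ≠ 0) := by
      simp only [Set.mem_iInter, Set.mem_preimage, Set.mem_singleton_iff] at hx'
      push_neg at hx'
      exact hx'
    have : 0 < g x := by
      have : g x = ∑ f ∈ t, ((f : C(X, ℝ)) x) ^ 2 := by
        simp [hg]
      rw [this]
      exact Finset.sum_pos' (fun f _ => sq_nonneg _) ⟨f0, hf0t, by positivity⟩
    exact this.ne'
  have : IsUnit g := (ContinuousMap.isUnit_iff_forall_ne_zero g).mpr hgne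
  exact M.isMaximal.ne_top (M.asIdeal.eq_top_of_isUnit_mem hgM this)

lemma gelfandMap_surjective {X : Type*} [TopologicalSpace X] [CompactSpace X] :
    Function.Surjective (gelfandMap X ℝ) := by
  intro M
  obtain ⟨x, hx⟩ := exists_common_zero M
  refine ⟨x, MaximalSpectrum.ext ?_⟩
  have hle : M.asIdeal ≤ (gelfandMap X ℝ x).asIdeal := fun f hf => mem_gelfandMap.mpr (hx f hf)
  exact (M.isMaximal.eq_of_le (gelfandMap X ℝ x).isMaximal.ne_top hle).symm

theorem stmt_19 (X : Type*) [TopologicalSpace X] [CompactSpace X] [T2Space X] [Nonempty X] :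
    IsHomeomorph (gelfandMap X ℝ) := by
  have hsurj : Function.Surjective (gelfandMap X ℝ) := gelfandMap_surjective
  have hinj : Function.Injective (gelfandMap X ℝ) := by
    intro x y hxy
    by_contra hne
    obtain ⟨f, hf0, hf1, -⟩ := exists_continuous_zero_one_of_isClosed
      (isClosed_singleton (x := x)) (isClosed_singleton (x := y))
      (Set.disjoint_singleton.mpr hne)
    have h1 : f ∈ (gelfandMap X ℝ x).asIdeal := mem_gelfandMap.mpr (hf0 rfl)
    rw [hxy] at h1
    have := mem_gelfandMap.mp h1
    rw [hf1 rfl] at this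
    norm_num at this
  have hbij : Function.Bijective (gelfandMap X ℝ) := ⟨hinj, hsurj⟩
  have hcont : Continuous (gelfandMap X ℝ) := by
    rw [continuous_induced_rng]
    rw [continuous_iff_isClosed]
    intro Z hZ
    obtain ⟨S, rfl⟩ := (PrimeSpectrum.isClosed_iff_zeroLocus Z).mp hZ
    have : (MaximalSpectrum.toPrimeSpectrum ∘ gelfandMap X ℝ) ⁻¹' PrimeSpectrum.zeroLocus S
        = ⋂ f ∈ S, f ⁻¹' {0} := by
      ext x
      simp only [Set.mem_preimage, Function.comp_apply, PrimeSpectrum.mem_zeroLocus,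
        Set.mem_iInter, Set.mem_singleton_iff]
      constructor
      · intro hx f hf
        exact mem_gelfandMap.mp (hx hf)
      · intro hx f hf
        exact mem_gelfandMap.mpr (hx f hf)
    rw [this]
    exact isClosed_biInter fun f _ => isClosed_singleton.preimage f.continuous
  have hclosed : IsClosedMap (gelfandMap X ℝ) := by
    intro C hC
    rw [isClosed_induced_iff]
    refine ⟨PrimeSpectrum.zeroLocus {f : C(X, ℝ) | ∀ x ∈ C, f x = 0},
      PrimeSpectrum.isClosed_zeroLocus _, ?_⟩
    ext M
    simp only [Set.mem_preimage, PrimeSpectrum.mem_zeroLocus, Set.mem_image]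
    constructor
    · intro hM
      obtain ⟨x, rfl⟩ := hsurj M
      refine ⟨x, ?_, rfl⟩
      by_contra hx
      obtain ⟨f, hf0, hf1, -⟩ := exists_continuous_zero_one_of_isClosed hC
        (isClosed_singleton (x := x)) (Set.disjoint_singleton_right.mpr hx)
      have : f ∈ (gelfandMap X ℝ x).asIdeal := hM fun y hy => hf0 hy
      have := mem_gelfandMap.mp this
      rw [hf1 rfl] at this
      norm_num at this
    · rintro ⟨x, hxC, rfl⟩ f hf
      exact mem_gelfandMap.mpr (hf x hxC)
  refine ⟨hcont, ?_, hbij⟩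
  intro U hU
  have : gelfandMap X ℝ '' U = (gelfandMap X ℝ '' Uᶜ)ᶜ := by
    rw [Set.image_compl_eq hbij, compl_compl]
  rw [this]
  exact (hclosed _ hU.isClosed_compl).isOpen_compl
end
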